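/- Fix positive integers d, C ≥ 2, m ≥ 2, a focus level α ∈ [0,1], a function g : ℝ^d → ℝ^C, background vectors b_1,…,b_{m−1} ∈ ℝ^d, and foreground vectors f_1,…,f_C ∈ ℝ^d. Then the class-averaged fixed-focus hard-attention loss satisfies (1/C) Σ_{y=1}^C [ −α log σ_y( g(f_y) ) − ((1−α)/(m−1)) Σ_{j=1}^{m−1} log σ_y( g(b_j) ) ] ≥ (1−α) log C. In particular, for any α < 1 the fixed-focus hard-attention loss (averaged over classes, with the same background segments appearing under every class label) is bounded below by the positive constant (1−α) log C, uniformly over all classification functions g. -/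

import Mathlib

open scoped BigOperators

/-- Softmax of a finite family of reals. -/
noncomputable def softmax {ι : Type*} [Fintype ι] (z : ι → ℝ) (k : ι) : ℝ :=
  Real.exp (z k) / ∑ l, Real.exp (z l)

lemma softmax_sum_pos {ι : Type*} [Fintype ι] [Nonempty ι] (z : ι → ℝ) :
    0 < ∑ l, Real.exp (z l) :=
  Finset.sum_pos (fun l _ => Real.exp_pos _) Finset.univ_nonempty

lemma softmax_pos {ι : Type*} [Fintype ι] [Nonempty ι] (z : ι → ℝ) (k : ι) :
    0 < softmax z k :=
  div_pos (Real.exp_pos _) (softmax_sum_pos z)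

lemma softmax_le_one {ι : Type*} [Fintype ι] [Nonempty ι] (z : ι → ℝ) (k : ι) :
    softmax z k ≤ 1 := by
  rw [softmax, div_le_one (softmax_sum_pos z)]
  exact Finset.single_le_sum (fun l _ => (Real.exp_pos _).le) (Finset.mem_univ k)

lemma softmax_sum_one {ι : Type*} [Fintype ι] [Nonempty ι] (z : ι → ℝ) :
    ∑ k, softmax z k = 1 := by
  simp only [softmax]
  rw [← Finset.sum_div, div_self (softmax_sum_pos z).ne']

lemma sum_log_softmax_le {C : ℕ} (hC : 0 < C) (z : Fin C → ℝ) :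
    ∑ y : Fin C, Real.log (softmax z y) ≤ -(C * Real.log C) := by
  haveI : Nonempty (Fin C) := Fin.pos_iff_nonempty.mp hC
  have hCpos : (0 : ℝ) < C := by exact_mod_cast hC
  have hjensen := strictConcaveOn_log_Ioi.concaveOn.le_map_sum
    (t := Finset.univ) (w := fun _ : Fin C => (C : ℝ)⁻¹) (p := fun y => softmax z y)
    (fun i _ => by positivity)
    (by simp [Finset.card_univ, mul_inv_cancel₀ hCpos.ne'])
    (fun i _ => softmax_pos z i)
  have hsum : ∑ i : Fin C, (C : ℝ)⁻¹ • softmax z i = (C : ℝ)⁻¹ := by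
    rw [← Finset.smul_sum, softmax_sum_one]; simp
  rw [hsum, Real.log_inv] at hjensen
  have h2 : ∑ i : Fin C, (C : ℝ)⁻¹ • Real.log (softmax z i)
      = (C : ℝ)⁻¹ * ∑ y : Fin C, Real.log (softmax z y) := by
    rw [← Finset.smul_sum]; simp
  rw [h2] at hjensen
  have h3 := mul_le_mul_of_nonneg_left hjensen hCpos.le
  calc ∑ y : Fin C, Real.log (softmax z y)
      = (C : ℝ) * ((C : ℝ)⁻¹ * ∑ y : Fin C, Real.log (softmax z y)) := by
        field_simp
    _ ≤ (C : ℝ) * (-Real.log C) := h3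
    _ = -(C * Real.log C) := by ring

/-- the class-averaged fixed-focus hard-attention loss is bounded below by
`(1−α) log C`, uniformly over all classification functions `g`. -/
theorem fixed_focus_hard_attention_loss_lower_bound
    (d C m : ℕ) (hd : 0 < d) (hC : 2 ≤ C) (hm : 2 ≤ m)
    (α : ℝ) (hα : α ∈ Set.Icc (0 : ℝ) 1)
    (g : EuclideanSpace ℝ (Fin d) → Fin C → ℝ)
    (b : Fin (m - 1) → EuclideanSpace ℝ (Fin d))
    (f : Fin C → EuclideanSpace ℝ (Fin d)) :
    (1 - α) * Real.log C ≤
      (C : ℝ)⁻¹ * ∑ y : Fin C,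
        (-(α * Real.log (softmax (g (f y)) y))
          - ((1 - α) / ((m : ℝ) - 1)) * ∑ j, Real.log (softmax (g (b j)) y)) := by
  obtain ⟨hα0, hα1⟩ := hα
  have hCpos : (0 : ℝ) < C := by
    have : (2 : ℝ) ≤ C := by exact_mod_cast hC
    linarith
  haveI : Nonempty (Fin C) := Fin.pos_iff_nonempty.mp (by omega)
  have hm1 : (0 : ℝ) < (m : ℝ) - 1 := by
    have : (2 : ℝ) ≤ m := by exact_mod_cast hm
    linarith
  have hcard : ((m - 1 : ℕ) : ℝ) = (m : ℝ) - 1 := by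
    have h1 : 1 ≤ m := by omega
    push_cast [Nat.cast_sub h1]; ring
  have h1 : ∀ y : Fin C,
      - ((1 - α) / ((m : ℝ) - 1)) * ∑ j, Real.log (softmax (g (b j)) y) ≤
      (-(α * Real.log (softmax (g (f y)) y))
          - ((1 - α) / ((m : ℝ) - 1)) * ∑ j, Real.log (softmax (g (b j)) y)) := by
    intro y
    have hlog : Real.log (softmax (g (f y)) y) ≤ 0 :=
      Real.log_nonpos (softmax_pos _ _).le (softmax_le_one _ _)
    nlinarith
  have h2 : (1 - α) * ((C : ℝ) * Real.log C) ≤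
      ∑ y : Fin C, - ((1 - α) / ((m : ℝ) - 1)) * ∑ j, Real.log (softmax (g (b j)) y) := by
    have key : ∑ y : Fin C, ∑ j, Real.log (softmax (g (b j)) y)
        ≤ -((m : ℝ) - 1) * ((C : ℝ) * Real.log C) := by
      rw [Finset.sum_comm]
      calc ∑ j, ∑ y : Fin C, Real.log (softmax (g (b j)) y)
          ≤ ∑ _j : Fin (m - 1), -((C : ℝ) * Real.log C) := by
            refine Finset.sum_le_sum fun j _ => ?_
            exact sum_log_softmax_le (by omega) (g (b j))
        _ = -((m : ℝ) - 1) * ((C : ℝ) * Real.log C) := by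
            rw [Finset.sum_const, Finset.card_univ, Fintype.card_fin, nsmul_eq_mul, hcard]
            ring
    have hnn : 0 ≤ (1 - α) / ((m : ℝ) - 1) := div_nonneg (by linarith) hm1.le
    calc (1 - α) * ((C : ℝ) * Real.log C)
        = ((1 - α) / ((m : ℝ) - 1)) * -(-((m : ℝ) - 1) * ((C : ℝ) * Real.log C)) := by
          field_simp
      _ ≤ ((1 - α) / ((m : ℝ) - 1)) *
            -(∑ y : Fin C, ∑ j, Real.log (softmax (g (b j)) y)) :=
          mul_le_mul_of_nonneg_left (by linarith) hnn
      _ = ∑ y : Fin C, - ((1 - α) / ((m : ℝ) - 1)) * ∑ j, Real.log (softmax (g (b j)) y) := by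
          rw [← Finset.sum_neg_distrib, Finset.mul_sum]
          refine Finset.sum_congr rfl fun y _ => by ring
  have h3 : (1 - α) * ((C : ℝ) * Real.log C) ≤
      ∑ y : Fin C, (-(α * Real.log (softmax (g (f y)) y))
          - ((1 - α) / ((m : ℝ) - 1)) * ∑ j, Real.log (softmax (g (b j)) y)) :=
    le_trans h2 (Finset.sum_le_sum fun y _ => h1 y)
  have h4 := mul_le_mul_of_nonneg_left h3 (inv_nonneg.mpr hCpos.le)
  calc (1 - α) * Real.log C
      = (C : ℝ)⁻¹ * ((1 - α) * ((C : ℝ) * Real.log C)) := by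
        field_simp
    _ ≤ _ := h4
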